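/- Let T denote the swap operator on 𝒦⊗𝒦 for a finite-dimensional Hilbert space 𝒦, P an orthogonal projection on 𝒦, and for i,j ∈ {0,1} define R_{ij} := (1/2)[I - (-1)^i T][P⊗(I-P)][I - (-1)^j T]. Then R_{ij}† = R_{ji} and R_{ij}R_{kl} = δ_{jk}R_{il} for all i,j,k,l ∈ {0,1}. -/
import Mathlib

open Matrix Kronecker

/-- The swap (exchange) operator on `𝒦 ⊗ 𝒦`. -/
def swapMatrix (m : Type*) [Fintype m] [DecidableEq m] : Matrix (m × m) (m × m) ℂ :=
  Matrix.of fun p q => if p.1 = q.2 ∧ p.2 = q.1 then 1 else 0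

/-- `R_{ij} := (1/2)[I - (-1)^i T][P⊗(I-P)][I - (-1)^j T]`. -/
noncomputable def Rop {m : Type*} [Fintype m] [DecidableEq m]
    (P : Matrix m m ℂ) (i j : Fin 2) : Matrix (m × m) (m × m) ℂ :=
  (2 : ℂ)⁻¹ • ((1 - ((-1 : ℂ)) ^ (i : ℕ) • swapMatrix m) * (P ⊗ₖ (1 - P)) *
    (1 - ((-1 : ℂ)) ^ (j : ℕ) • swapMatrix m))

section aux

variable {m : Type*} [Fintype m] [DecidableEq m]

lemma swapMatrix_conjTranspose : (swapMatrix m)ᴴ = swapMatrix m := by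
  ext p q
  simp only [swapMatrix, conjTranspose_apply, of_apply]
  by_cases h : q.1 = p.2 ∧ q.2 = p.1
  · have h' : p.1 = q.2 ∧ p.2 = q.1 := ⟨h.2.symm, h.1.symm⟩
    rw [if_pos h, if_pos h', star_one]
  · have h' : ¬(p.1 = q.2 ∧ p.2 = q.1) := fun hc => h ⟨hc.2.symm, hc.1.symm⟩
    rw [if_neg h, if_neg h', star_zero]

lemma swapMatrix_mul_swapMatrix : swapMatrix m * swapMatrix m = 1 := by
  ext p q
  simp only [swapMatrix, mul_apply, of_apply]
  rw [Finset.sum_eq_single (q.2, q.1)]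
  · simp only [one_apply]
    by_cases h : p = q
    · subst h; simp
    · have : ¬(p.1 = q.1 ∧ p.2 = q.2) := by
        intro ⟨h1, h2⟩; exact h (Prod.ext h1 h2)
      simp [this, h]
  · intro r _ hr
    by_cases h : r.1 = q.2 ∧ r.2 = q.1
    · exact absurd (Prod.ext h.1 h.2) hr
    · simp [h]
  · simp

lemma swapMatrix_mul_kron (A B : Matrix m m ℂ) :
    swapMatrix m * (A ⊗ₖ B) = (B ⊗ₖ A) * swapMatrix m := by
  ext p q
  simp only [swapMatrix, mul_apply, of_apply, kroneckerMap_apply]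
  rw [Finset.sum_eq_single (p.2, p.1), Finset.sum_eq_single (q.2, q.1)]
  · simp [mul_comm]
  · intro r _ hr
    by_cases h : r.1 = q.2 ∧ r.2 = q.1
    · exact absurd (Prod.ext h.1 h.2) hr
    · simp [h]
  · simp
  · intro r _ hr
    by_cases h : p.1 = r.2 ∧ p.2 = r.1
    · exact absurd (Prod.ext h.2.symm h.1.symm) hr
    · simp [h]
  · simp

lemma kron_conjTranspose (A B : Matrix m m ℂ) : (A ⊗ₖ B)ᴴ = Aᴴ ⊗ₖ Bᴴ := by
  ext p q
  simp [conjTranspose_apply, mul_comm]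

end aux

/-- the operators `R_{ij}` built from a projection `P` and the swap `T`
satisfy `R_{ij}† = R_{ji}` and `R_{ij}R_{kl} = δ_{jk}R_{il}`. -/
theorem Rop_matrix_units {m : Type*} [Fintype m] [DecidableEq m]
    (P : Matrix m m ℂ) (hPadj : Pᴴ = P) (hPproj : P * P = P) :
    (∀ i j, (Rop P i j)ᴴ = Rop P j i) ∧
    (∀ i j k l, Rop P i j * Rop P k l = if j = k then Rop P i l else 0) := by
  set T := swapMatrix m with hT
  have hT2 : T * T = 1 := swapMatrix_mul_swapMatrix
  have hTadj : Tᴴ = T := swapMatrix_conjTranspose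
  set Q : Matrix (m × m) (m × m) ℂ := P ⊗ₖ (1 - P) with hQ
  have hQadj : Qᴴ = Q := by
    rw [hQ, kron_conjTranspose, hPadj, conjTranspose_sub, conjTranspose_one, hPadj]
  have hQ2 : Q * Q = Q := by
    have h1P : (1 - P) * (1 - P) = 1 - P := by
      rw [sub_mul, one_mul, mul_sub, mul_one, hPproj, sub_self, sub_zero]
    rw [hQ, ← mul_kronecker_mul, hPproj, h1P]
  have hQTQ : Q * T * Q = 0 := by
    have h1 : T * Q = ((1 - P) ⊗ₖ P) * T := by rw [hQ, swapMatrix_mul_kron]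
    rw [mul_assoc, h1, ← mul_assoc, hQ, ← mul_kronecker_mul]
    have : P * (1 - P) = 0 := by rw [mul_sub, mul_one, hPproj, sub_self]
    rw [this, zero_kronecker, zero_mul]
  set A : ℂ → Matrix (m × m) (m × m) ℂ := fun a => 1 - a • T with hA
  have hRop : ∀ i j, Rop P i j =
      (2 : ℂ)⁻¹ • (A ((-1 : ℂ) ^ (i : ℕ)) * Q * A ((-1 : ℂ) ^ (j : ℕ))) := fun i j => rfl
  have hQAQ : ∀ b : ℂ, Q * A b * Q = Q := by
    intro b
    rw [hA]
    simp only [mul_sub, sub_mul, mul_one, mul_smul_comm, smul_mul_assoc]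
    rw [hQTQ, hQ2, smul_zero, sub_zero]
  have expand : ∀ a b : ℂ, A a * A b = (1 + (a * b) • (1 : Matrix (m × m) (m × m) ℂ))
      - (a + b) • T := by
    intro a b
    rw [hA]
    simp only [sub_mul, mul_sub, one_mul, mul_one, smul_mul_smul_comm, hT2]
    module
  have hAA : ∀ a : ℂ, a * a = 1 → A a * A a = (2 : ℂ) • A a := by
    intro a ha
    rw [expand a a, ha, hA]
    simp only [smul_sub, smul_smul]
    module
  have hAB : ∀ a : ℂ, a * a = 1 → A a * A (-a) = 0 := by
    intro a ha
    have h1 : a * -a = -1 := by rw [mul_neg, ha]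
    have h2 : a + -a = 0 := by ring
    rw [expand a (-a), h1, h2, zero_smul, sub_zero, neg_smul, one_smul, add_neg_cancel]
  have hsq : ∀ j : Fin 2, ((-1 : ℂ) ^ (j : ℕ)) * ((-1 : ℂ) ^ (j : ℕ)) = 1 := by
    intro j; fin_cases j <;> norm_num
  constructor
  · intro i j
    rw [hRop, hRop, conjTranspose_smul, conjTranspose_mul, conjTranspose_mul, hA]
    simp only [conjTranspose_sub, conjTranspose_one, conjTranspose_smul, hTadj, hQadj]
    have hs : ∀ k : Fin 2, star ((-1 : ℂ) ^ (k : ℕ)) = (-1 : ℂ) ^ (k : ℕ) := by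
      intro k; simp
    rw [hs, hs]
    have : star ((2 : ℂ)⁻¹) = (2 : ℂ)⁻¹ := by norm_num
    rw [this, mul_assoc]
  · intro i j k l
    by_cases hjk : j = k
    · subst hjk
      rw [if_pos rfl, hRop, hRop, hRop, smul_mul_smul_comm]
      have assoc : A ((-1 : ℂ) ^ (i : ℕ)) * Q * A ((-1 : ℂ) ^ (j : ℕ)) *
          (A ((-1 : ℂ) ^ (j : ℕ)) * Q * A ((-1 : ℂ) ^ (l : ℕ)))
          = A ((-1 : ℂ) ^ (i : ℕ)) * (Q * (A ((-1 : ℂ) ^ (j : ℕ)) * A ((-1 : ℂ) ^ (j : ℕ))) * Q)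
            * A ((-1 : ℂ) ^ (l : ℕ)) := by
        simp only [mul_assoc]
      rw [assoc, hAA _ (hsq j)]
      have h2 : Q * ((2 : ℂ) • A ((-1 : ℂ) ^ (j : ℕ))) * Q = (2 : ℂ) • Q := by
        rw [mul_smul_comm, smul_mul_assoc, hQAQ]
      rw [h2, mul_smul_comm, smul_mul_assoc, smul_smul]
      norm_num
    · rw [if_neg hjk, hRop, hRop, smul_mul_smul_comm]
      have hk : ((-1 : ℂ) ^ (k : ℕ)) = -((-1 : ℂ) ^ (j : ℕ)) := by
        fin_cases j <;> fin_cases k <;> simp_all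
      rw [hk]
      have assoc : A ((-1 : ℂ) ^ (i : ℕ)) * Q * A ((-1 : ℂ) ^ (j : ℕ)) *
          (A (-((-1 : ℂ) ^ (j : ℕ))) * Q * A ((-1 : ℂ) ^ (l : ℕ)))
          = A ((-1 : ℂ) ^ (i : ℕ)) * Q *
            ((A ((-1 : ℂ) ^ (j : ℕ)) * A (-((-1 : ℂ) ^ (j : ℕ)))) *
              (Q * A ((-1 : ℂ) ^ (l : ℕ)))) := by
        simp only [mul_assoc]
      rw [assoc, hAB _ (hsq j), zero_mul, mul_zero, smul_zero]
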